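/- Let U : [−h, h] → ℝ^{n×n} be continuously differentiable on (0,h) and (−h,0), continuous on [−h,h], and satisfy the dynamic property U′(θ) − U′(θ−h)·D = U(θ)·A₀ + U(θ−h)·A₁ for θ ∈ (0,h). Then for every natural k ≥ 1, integration by parts yields: −k·G_{k−1} − (−h)^k·U(0) + k·Ḡ_{k−1}·D + (−h)^k·U(−h)·D = G_k·A₀ + Ḡ_k·A₁, where G_k = ∫_{−h}^0 U(h+θ)·θ^k dθ and Ḡ_k = ∫_{−h}^0 U(θ)·θ^k dθ. -/

import Mathlib

open Matrix MeasureTheory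

attribute [local instance] Matrix.normedAddCommGroup Matrix.normedSpace

/-- Integration by parts in the recursion of Proposition 1: if `U` is continuous on
`[−h,h]`, differentiable on `(0,h)` and `(−h,0)` with derivative `U'`, and satisfies the
dynamic property `U′(θ) − U′(θ−h)·D = U(θ)·A₀ + U(θ−h)·A₁` on `(0,h)`, then for `k ≥ 1`:
`−k·G_{k−1} − (−h)^k·U(0) + k·Ḡ_{k−1}·D + (−h)^k·U(−h)·D = G_k·A₀ + Ḡ_k·A₁`,
where `G_k = ∫_{−h}^0 θ^k • U(h+θ) dθ` and `Ḡ_k = ∫_{−h}^0 θ^k • U(θ) dθ`. -/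
theorem stmt9 (n : ℕ) (h : ℝ) (hh : 0 < h)
    (A₀ A₁ D : Matrix (Fin n) (Fin n) ℝ)
    (U U' : ℝ → Matrix (Fin n) (Fin n) ℝ)
    (hcont : ContinuousOn U (Set.Icc (-h) h))
    (hderiv : ∀ θ ∈ Set.Ioo (0:ℝ) h ∪ Set.Ioo (-h) (0:ℝ), HasDerivAt U (U' θ) θ)
    (hdyn : ∀ θ ∈ Set.Ioo (0:ℝ) h,
      U' θ - U' (θ - h) * D = U θ * A₀ + U (θ - h) * A₁)
    (k : ℕ) (hk : 1 ≤ k) :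
    -((k : ℝ) • (∫ θ in (-h)..0, θ ^ (k - 1) • U (h + θ))) -
        (-h) ^ k • U 0 +
        (k : ℝ) • ((∫ θ in (-h)..0, θ ^ (k - 1) • U θ) * D) +
        (-h) ^ k • (U (-h) * D) =
      (∫ θ in (-h)..0, θ ^ k • U (h + θ)) * A₀ +
        (∫ θ in (-h)..0, θ ^ k • U θ) * A₁ := by
  obtain ⟨m, rfl⟩ : ∃ m, k = m + 1 := ⟨k - 1, by omega⟩
  letI : ENormedAddMonoid (Matrix (Fin n) (Fin n) ℝ) := NormedAddCommGroup.toENormedAddCommMonoid.toENormedAddMonoid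
  simp only [Nat.add_sub_cancel]
  have hle : (-h : ℝ) ≤ 0 := by linarith
  -- continuity facts on [-h, 0]
  have hU0 : ContinuousOn U (Set.Icc (-h) 0) :=
    hcont.mono (Set.Icc_subset_Icc le_rfl (by linarith))
  have hUsh : ContinuousOn (fun θ => U (h + θ)) (Set.Icc (-h) 0) := by
    apply hcont.comp (continuous_const.add continuous_id).continuousOn
    intro x hx
    simp only [Set.mem_Icc] at hx
    simp only [Set.mem_Icc, id_eq, Pi.add_apply]
    constructor <;> linarith [hx.1, hx.2]
  -- the product function and its derivative
  set f : ℝ → Matrix (Fin n) (Fin n) ℝ :=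
    fun θ => θ ^ (m + 1) • (U (h + θ) - U θ * D) with hf
  set g : ℝ → Matrix (Fin n) (Fin n) ℝ :=
    fun θ => (((m : ℝ) + 1) * θ ^ m) • (U (h + θ) - U θ * D)
      + θ ^ (m + 1) • (U (h + θ) * A₀ + U θ * A₁) with hg
  have hgcont : ContinuousOn g (Set.Icc (-h) 0) := by
    apply ContinuousOn.add
    · exact ((continuous_const.mul (continuous_pow m)).continuousOn).smul
        (hUsh.sub (hU0.mul continuousOn_const))
    · exact (continuous_pow (m+1)).continuousOn.smul
        ((hUsh.mul continuousOn_const).add (hU0.mul continuousOn_const))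
  have hgint : IntervalIntegrable g volume (-h) 0 := by
    apply ContinuousOn.intervalIntegrable
    rwa [Set.uIcc_of_le hle]
  have hfderiv : ∀ θ ∈ Set.Ioo (-h) (0:ℝ), HasDerivAt f (g θ) θ := by
    intro θ hθ
    have h1 : HasDerivAt (fun θ : ℝ => θ ^ (m + 1))
        (((m : ℝ) + 1) * θ ^ m) θ := by
      simpa using hasDerivAt_pow (m + 1) θ
    have hmem : h + θ ∈ Set.Ioo (0:ℝ) h := ⟨by linarith [hθ.1], by linarith [hθ.2]⟩
    have hin : HasDerivAt (fun x : ℝ => h + x) 1 θ := by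
      simpa using (hasDerivAt_id θ).const_add h
    have h2 : HasDerivAt (fun θ => U (h + θ)) (U' (h + θ)) θ := by
      have := HasDerivAt.scomp θ (hderiv (h + θ) (Or.inl hmem)) hin
      rw [one_smul] at this
      exact this
    have h3 : HasDerivAt (fun θ => U θ * D) (U' θ * D) θ := by
      let L : Matrix (Fin n) (Fin n) ℝ →L[ℝ] Matrix (Fin n) (Fin n) ℝ :=
        LinearMap.toContinuousLinearMap (LinearMap.mulRight ℝ D)
      have := L.hasFDerivAt.comp_hasDerivAt θ (hderiv θ (Or.inr hθ))
      exact this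
    have h4 : HasDerivAt (fun θ => U (h + θ) - U θ * D)
        (U' (h + θ) - U' θ * D) θ := h2.sub h3
    have h5 := h1.smul h4
    have hdyn' : U' (h + θ) - U' θ * D = U (h + θ) * A₀ + U θ * A₁ := by
      have := hdyn (h + θ) hmem
      simpa using this
    rw [hdyn'] at h5
    have e : g θ = θ ^ (m + 1) • (U (h + θ) * A₀ + U θ * A₁)
        + (((m : ℝ) + 1) * θ ^ m) • (U (h + θ) - U θ * D) := add_comm _ _
    rw [e]
    exact h5
  -- FTC
  have hfcont : ContinuousOn f (Set.Icc (-h) 0) :=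
    (continuous_pow (m+1)).continuousOn.smul (hUsh.sub (hU0.mul continuousOn_const))
  have hFTC : ∫ θ in (-h)..0, g θ = f 0 - f (-h) :=
    intervalIntegral.integral_eq_sub_of_hasDerivAt_of_le hle hfcont hfderiv hgint
  have hf0 : f 0 = 0 := by simp [hf]
  have hfmh : f (-h) = (-h) ^ (m+1) • (U 0 - U (-h) * D) := by
    simp only [hf, add_neg_cancel]
  -- integrability of pieces
  have int1 : IntervalIntegrable (fun θ => θ ^ m • U (h + θ)) volume (-h) 0 := by
    apply ContinuousOn.intervalIntegrable
    rw [Set.uIcc_of_le hle]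
    exact (continuous_pow m).continuousOn.smul hUsh
  have int2 : IntervalIntegrable (fun θ => θ ^ m • (U θ * D)) volume (-h) 0 := by
    apply ContinuousOn.intervalIntegrable
    rw [Set.uIcc_of_le hle]
    exact (continuous_pow m).continuousOn.smul (hU0.mul continuousOn_const)
  have int3 : IntervalIntegrable (fun θ => θ ^ (m+1) • (U (h + θ) * A₀)) volume (-h) 0 := by
    apply ContinuousOn.intervalIntegrable
    rw [Set.uIcc_of_le hle]
    exact (continuous_pow (m+1)).continuousOn.smul (hUsh.mul continuousOn_const)
  have int4 : IntervalIntegrable (fun θ => θ ^ (m+1) • (U θ * A₁)) volume (-h) 0 := by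
    apply ContinuousOn.intervalIntegrable
    rw [Set.uIcc_of_le hle]
    exact (continuous_pow (m+1)).continuousOn.smul (hU0.mul continuousOn_const)
  have int5 : IntervalIntegrable (fun θ => θ ^ m • U θ) volume (-h) 0 := by
    apply ContinuousOn.intervalIntegrable
    rw [Set.uIcc_of_le hle]
    exact (continuous_pow m).continuousOn.smul hU0
  have int6 : IntervalIntegrable (fun θ => θ ^ (m+1) • U (h + θ)) volume (-h) 0 := by
    apply ContinuousOn.intervalIntegrable
    rw [Set.uIcc_of_le hle]
    exact (continuous_pow (m+1)).continuousOn.smul hUsh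
  have int7 : IntervalIntegrable (fun θ => θ ^ (m+1) • U θ) volume (-h) 0 := by
    apply ContinuousOn.intervalIntegrable
    rw [Set.uIcc_of_le hle]
    exact (continuous_pow (m+1)).continuousOn.smul hU0
  -- pull right-multiplication out of integrals
  have mulR : ∀ (B : Matrix (Fin n) (Fin n) ℝ) (v : ℝ → Matrix (Fin n) (Fin n) ℝ),
      IntervalIntegrable v volume (-h) 0 →
      (∫ θ in (-h)..0, v θ * B) = (∫ θ in (-h)..0, v θ) * B := by
    intro B v hv
    let L : Matrix (Fin n) (Fin n) ℝ →L[ℝ] Matrix (Fin n) (Fin n) ℝ :=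
      LinearMap.toContinuousLinearMap (LinearMap.mulRight ℝ B)
    have := L.intervalIntegral_comp_comm hv
    exact this
  have r2 : (∫ θ in (-h)..0, θ ^ m • (U θ * D))
      = (∫ θ in (-h)..0, θ ^ m • U θ) * D := by
    rw [← mulR D _ int5]; simp_rw [smul_mul_assoc]
  have r3 : (∫ θ in (-h)..0, θ ^ (m+1) • (U (h + θ) * A₀))
      = (∫ θ in (-h)..0, θ ^ (m+1) • U (h + θ)) * A₀ := by
    rw [← mulR A₀ _ int6]; simp_rw [smul_mul_assoc]
  have r4 : (∫ θ in (-h)..0, θ ^ (m+1) • (U θ * A₁))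
      = (∫ θ in (-h)..0, θ ^ (m+1) • U θ) * A₁ := by
    rw [← mulR A₁ _ int7]; simp_rw [smul_mul_assoc]
  have hsplit : ∫ θ in (-h)..0, g θ =
      ((m : ℝ) + 1) • (∫ θ in (-h)..0, θ ^ m • U (h + θ))
      - ((m : ℝ) + 1) • ((∫ θ in (-h)..0, θ ^ m • U θ) * D)
      + ((∫ θ in (-h)..0, θ ^ (m+1) • U (h + θ)) * A₀
        + (∫ θ in (-h)..0, θ ^ (m+1) • U θ) * A₁) := by
    have e1 : g = fun θ =>
        (((m : ℝ) + 1) • (θ ^ m • U (h + θ)) - ((m : ℝ) + 1) • (θ ^ m • (U θ * D)))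
        + (θ ^ (m+1) • (U (h + θ) * A₀) + θ ^ (m+1) • (U θ * A₁)) := by
      funext θ
      simp only [hg, smul_sub, smul_add, ← smul_smul]
    have int1' : IntervalIntegrable (fun θ => ((m:ℝ)+1) • (θ ^ m • U (h + θ)))
        volume (-h) 0 := by
      apply ContinuousOn.intervalIntegrable
      rw [Set.uIcc_of_le hle]
      exact (continuousOn_const (c := ((m:ℝ)+1))).smul ((continuous_pow m).continuousOn.smul hUsh)
    have int2' : IntervalIntegrable (fun θ => ((m:ℝ)+1) • (θ ^ m • (U θ * D)))
        volume (-h) 0 := by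
      apply ContinuousOn.intervalIntegrable
      rw [Set.uIcc_of_le hle]
      exact (continuousOn_const (c := ((m:ℝ)+1))).smul
        ((continuous_pow m).continuousOn.smul (hU0.mul continuousOn_const))
    rw [e1]
    simp only []
    rw [intervalIntegral.integral_add (int1'.sub int2') (int3.add int4),
        intervalIntegral.integral_sub int1' int2',
        intervalIntegral.integral_add int3 int4,
        intervalIntegral.integral_smul, intervalIntegral.integral_smul, r2, r3, r4]
  have key : ((m : ℝ) + 1) • (∫ θ in (-h)..0, θ ^ m • U (h + θ))
      - ((m : ℝ) + 1) • ((∫ θ in (-h)..0, θ ^ m • U θ) * D)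
      + ((∫ θ in (-h)..0, θ ^ (m+1) • U (h + θ)) * A₀
        + (∫ θ in (-h)..0, θ ^ (m+1) • U θ) * A₁)
      = -((-h) ^ (m+1) • (U 0 - U (-h) * D)) := by
    rw [← hsplit, hFTC, hf0, hfmh, zero_sub]
  have e : (∫ θ in (-h)..0, θ ^ (m+1) • U (h + θ)) * A₀
      + (∫ θ in (-h)..0, θ ^ (m+1) • U θ) * A₁
      = -((-h) ^ (m+1) • (U 0 - U (-h) * D))
        - (((m : ℝ) + 1) • (∫ θ in (-h)..0, θ ^ m • U (h + θ))
          - ((m : ℝ) + 1) • ((∫ θ in (-h)..0, θ ^ m • U θ) * D)) := by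
    rw [← key]; abel
  push_cast
  rw [e, smul_sub]
  abel
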